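/- Fix a positive integer k and a partition λ contained in the m×n rectangle ⟨m^n⟩ (the partition with n parts equal to m). Then: (1) there are at most min{m,n} partitions μ such that λ∖μ is a k-ribbon; and (2) there are at most min{m,n} partitions μ contained in ⟨m^n⟩ such that μ∖λ is a k-ribbon. -/

import Mathlib

open scoped BigOperators
open MeasureTheory

noncomputable section

namespace RMT

attribute [local instance] Classical.propDecidable

/-! ### Sequences of complex numbers -/

/-- `e(X)`, the product of all elements of the sequence `X`. -/
def listProd (X : List ℂ) : ℂ := X.prod

/-- `-X`, the sequence of negatives. -/
def negL (X : List ℂ) : List ℂ := X.map (fun z => -z)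

/-- `X⁻¹`, the sequence of inverses. -/
def invL (X : List ℂ) : List ℂ := X.map (fun z => z⁻¹)

/-- `abs(X)`, the sequence of absolute values (as complex numbers). -/
def absL (X : List ℂ) : List ℂ := X.map (fun z => (‖z‖ : ℂ))

/-- `Δ(X; Y) = ∏_{x ∈ X, y ∈ Y} (x - y)`. -/
def pairDelta (X Y : List ℂ) : ℂ := (X.map (fun x => (Y.map (fun y => x - y)).prod)).prod

/-- The power sum `p_k(X) = ∑_{x ∈ X} x^k`. -/
def pSym (k : ℕ) (X : List ℂ) : ℂ := (X.map (fun z => z ^ k)).sum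

/-- `p_λ(X) = ∏_i p_{λ_i}(X)` for a multiset of parts. -/
def pMult (p : Multiset ℕ) (X : List ℂ) : ℂ := (p.map (fun k => pSym k X)).prod

/-- The complete homogeneous symmetric polynomial `h_k(X)`. -/
def hSym (k : ℕ) (X : List ℂ) : ℂ :=
  ∑ α ∈ (Finset.univ : Finset (Fin X.length → Fin (k + 1))).filter
      (fun α => (∑ i, ((α i : ℕ))) = k),
    ∏ i, X.get i ^ ((α i : ℕ))

/-- `h_k(X)` for integer `k`, vanishing for negative `k`. -/
def hSymZ (k : ℤ) (X : List ℂ) : ℂ := if 0 ≤ k then hSym k.toNat X else 0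

/-- The monomial symmetric polynomial `m_λ(X)`, where `λ` is given as the multiset of
its parts: the sum of `x_1^{α_1} ⋯ x_n^{α_n}` over all distinct rearrangements `α` of `λ`
(with zero parts removed) padded with zeros to length `n = l(X)`; it vanishes when `λ` has more
positive parts than `l(X)`. -/
def mSym (p : Multiset ℕ) (X : List ℂ) : ℂ :=
  ∑ α ∈ (Finset.univ : Finset (Fin X.length → Fin (p.sum + 1))).filter
      (fun α => (Finset.univ.val.map (fun i => ((α i : ℕ)))) =
        (p.filter (fun x => x ≠ 0)) +
          Multiset.replicate (X.length - (p.filter (fun x => x ≠ 0)).card) 0),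
    ∏ i, X.get i ^ ((α i : ℕ))

/-! ### Partitions, modelled as Young diagrams -/

/-- The multiset of (positive) parts of a partition. -/
def parts (l : YoungDiagram) : Multiset ℕ := (l.rowLens : Multiset ℕ)

/-- `l(λ)`, the number of positive parts. -/
def plen (l : YoungDiagram) : ℕ := l.colLen 0

/-- `|λ|`, the size of the partition. -/
def psize (l : YoungDiagram) : ℕ := l.cells.card

/-- `m_i(λ)`, the number of parts equal to `i`. -/
def multOf (l : YoungDiagram) (i : ℕ) : ℕ := (parts l).count i

/-- `z_λ = ∏_{i ≥ 1} i^{m_i(λ)} m_i(λ)!`. -/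
def zPart (l : YoungDiagram) : ℕ :=
  ∏ i ∈ (parts l).toFinset, i ^ multOf l i * (multOf l i).factorial

/-- The parts of `λ - ⟨1^{l(λ)}⟩`, i.e. of `λ` with 1 subtracted from every (positive) part. -/
def partsMinusOne (l : YoungDiagram) : Multiset ℕ := (parts l).map (fun a => a - 1)

/-- The Schur polynomial attached to a list of (integer) parts, via the Jacobi–Trudi
determinant; this is the polynomial extension of the bialternant `det(x_i^{λ_j+n-j})/Δ(X)`. -/
def schurL (p : List ℤ) (X : List ℂ) : ℂ :=
  Matrix.det (Matrix.of (fun i j : Fin p.length => hSymZ (p.get i + (j : ℤ) - (i : ℤ)) X))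

/-- The Schur polynomial `s_λ(X)` of a partition. -/
def schur (l : YoungDiagram) (X : List ℂ) : ℂ :=
  schurL (l.rowLens.map (fun a => (a : ℤ))) X

/-! ### Ribbons -/

/-- Two boxes are edgewise adjacent. -/
def adjCell (c d : ℕ × ℕ) : Prop :=
  (c.1 = d.1 ∧ (c.2 = d.2 + 1 ∨ d.2 = c.2 + 1)) ∨
    (c.2 = d.2 ∧ (c.1 = d.1 + 1 ∨ d.1 = c.1 + 1))

/-- A finite set of boxes is edgewise connected. -/
def ConnCells (s : Finset (ℕ × ℕ)) : Prop :=
  ∀ c ∈ s, ∀ d ∈ s, Relation.ReflTransGen (fun a b => a ∈ s ∧ b ∈ s ∧ adjCell a b) c d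

/-- `IsRibbon μ λ k` says that `μ ⊆ λ` and the skew diagram `λ ∖ μ` is a `k`-ribbon:
it has `k` boxes, is edgewise connected, and contains no 2×2 block of boxes.
(This is the relation written `μ →_k λ`.) -/
def IsRibbon (μ l : YoungDiagram) (k : ℕ) : Prop :=
  μ ≤ l ∧ (l.cells \ μ.cells).card = k ∧ ConnCells (l.cells \ μ.cells) ∧
    ¬ ∃ i j : ℕ, ((i, j) ∈ l.cells \ μ.cells ∧ (i + 1, j) ∈ l.cells \ μ.cells ∧
      (i, j + 1) ∈ l.cells \ μ.cells ∧ (i + 1, j + 1) ∈ l.cells \ μ.cells)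

/-- The height of the skew diagram `λ ∖ μ`: one less than the number of rows it occupies. -/
def ribbonHeight (μ l : YoungDiagram) : ℕ := ((l.cells \ μ.cells).image Prod.fst).card - 1

/-- The rectangular partition `⟨m^n⟩` (n rows of length m). -/
def rect (m n : ℕ) : YoungDiagram :=
  ⟨Finset.range n ×ˢ Finset.range m, by
    intro a b hba ha
    simp only [Finset.coe_product, Set.mem_prod, Finset.mem_coe, Finset.mem_range] at *
    exact ⟨lt_of_le_of_lt hba.1 ha.1, lt_of_le_of_lt hba.2 ha.2⟩⟩

/-- `HasMNIndex λ m n k` says that the `(m,n)`-index of the partition `λ` is `k`: `k` is the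
largest (possibly negative) integer with `k ≤ min{m,n}` such that the box `(m+1-k, n+1-k)`
(in the 1-indexed column/row coordinates of the paper, i.e. the 0-indexed cell
`(n-k, m-k)` in row/column coordinates) does not belong to `λ`. -/
def HasMNIndex (l : YoungDiagram) (m n : ℕ) (k : ℤ) : Prop :=
  (k ≤ min (m : ℤ) (n : ℤ) ∧ (((n : ℤ) - k).toNat, ((m : ℤ) - k).toNat) ∉ l.cells) ∧
    ∀ k' : ℤ, k' ≤ min (m : ℤ) (n : ℤ) →
      (((n : ℤ) - k').toNat, ((m : ℤ) - k').toNat) ∉ l.cells → k' ≤ k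

/-! ### The ring of symmetric functions, modelled as polynomials in the power sums -/

/-- The ring of symmetric functions over `ℂ`: since the power sums `p₁, p₂, …` are
algebraically independent generators, we model it as the polynomial ring in the
variables `p₁, p₂, …`, with variable `n : ℕ` denoting `p_{n+1}`. -/
abbrev Sym := MvPolynomial ℕ ℂ

/-- The power sum `p_k` (for `k ≥ 1`) as an element of `Sym`. -/
def pGen (k : ℕ) : Sym := MvPolynomial.X (k - 1)

/-- `p_λ = ∏_i p_{λ_i}` as an element of `Sym`. -/
def pMultF (p : Multiset ℕ) : Sym := (p.map pGen).prod

/-- `z_λ` for a multiset of parts. -/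
def zMult (p : Multiset ℕ) : ℕ := ∏ i ∈ p.toFinset, i ^ p.count i * (p.count i).factorial

/-- The complete homogeneous symmetric function `h_k = ∑_{|μ| = k} z_μ⁻¹ p_μ` in `Sym`. -/
def hF (k : ℕ) : Sym := ∑ μ : Nat.Partition k, ((zMult μ.parts : ℂ))⁻¹ • pMultF μ.parts

/-- `h_k` for integer `k`, vanishing for negative `k`. -/
def hFZ (k : ℤ) : Sym := if 0 ≤ k then hF k.toNat else 0

/-- The Schur function `s_λ` as an element of `Sym` (Jacobi–Trudi determinant). -/
def sF (l : YoungDiagram) : Sym :=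
  Matrix.det (Matrix.of (fun i j : Fin (plen l) =>
    hFZ ((l.rowLen (i : ℕ) : ℤ) + (j : ℤ) - (i : ℤ))))

/-- The weight `z` of a monomial in the power sums: for `α` with `α i` the exponent of
`p_{i+1}`, this is `∏_i (i+1)^{α i} (α i)!`, so that `⟨p_λ, p_μ⟩ = z_λ δ_{λμ}`. -/
def zExp (α : ℕ →₀ ℕ) : ℂ :=
  ∏ i ∈ α.support, ((i + 1 : ℕ) : ℂ) ^ (α i) * (Nat.factorial (α i))

/-- The Hall inner product on `Sym`, determined by `⟨p_λ, p_μ⟩ = z_λ δ_{λμ}`. -/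
def hallInner (f g : Sym) : ℂ :=
  ∑ α ∈ f.support, MvPolynomial.coeff α f * MvPolynomial.coeff α g * zExp α

/-- The Littlewood–Richardson coefficient `c^λ_{μν} = ⟨s_μ s_ν, s_λ⟩`. -/
def lrCoeff (μ ν l : YoungDiagram) : ℂ := hallInner (sF μ * sF ν) (sF l)

/-- The Littlewood–Schur function `LS_λ(X; Y) = ∑_{μ,ν} c^λ_{μν} s_μ(X) s_{ν'}(Y)`. -/
def LSfun (l : YoungDiagram) (X Y : List ℂ) : ℂ :=
  ∑ᶠ p : YoungDiagram × YoungDiagram, lrCoeff p.1 p.2 l * schur p.1 X * schur p.2.transpose Y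

/-- The derivation operator `∂/∂p_k` (for `k ≥ 1`) on `Sym`. -/
def pderivK (k : ℕ) (f : Sym) : Sym := MvPolynomial.pderiv (k - 1) f

/-- The composite derivation operator `∂/∂p_λ`. -/
def pderivMult (p : Multiset ℕ) (f : Sym) : Sym :=
  (Multiset.sort p (· ≤ ·)).foldr (fun k g => pderivK k g) f

/-- Evaluation (specialization) of a symmetric function at a finite sequence `X`:
the algebra homomorphism sending each `p_k` to `p_k(X)`. -/
def evalAt (X : List ℂ) : Sym →ₐ[ℂ] ℂ := MvPolynomial.aeval (fun i => pSym (i + 1) X)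

/-! ### The unitary group, Haar measure and characteristic polynomials -/

/-- The unitary group `U(N)`. -/
abbrev UG (N : ℕ) := Matrix.unitaryGroup (Fin N) ℂ

instance (N : ℕ) : MeasurableSpace (UG N) := borel _

/-- `μ` is the normalized (probability) Haar measure on `U(N)`. -/
def IsHaarProb {N : ℕ} (μ : Measure (UG N)) : Prop :=
  IsProbabilityMeasure μ ∧ ∀ g : UG N, Measure.map (fun x => g * x) μ = μ

/-- The characteristic polynomial `χ_g(z) = det(I - z g⁻¹)` of a unitary matrix. -/
def chi {N : ℕ} (g : UG N) (z : ℂ) : ℂ :=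
  Matrix.det ((1 : Matrix (Fin N) (Fin N) ℂ) - z • ((g⁻¹ : UG N) : Matrix (Fin N) (Fin N) ℂ))

/-- The derivative `χ'_g`. -/
def chiD {N : ℕ} (g : UG N) (z : ℂ) : ℂ := deriv (chi g) z

/-- `det(-g)`. -/
def detNeg {N : ℕ} (g : UG N) : ℂ := Matrix.det (-((g : Matrix (Fin N) (Fin N) ℂ)))

/-- The completed characteristic polynomial `Λ_g(z) = det(-g)^{1/2} z^{-N/2} χ_g(z)`,
using principal branches. -/
def Lam {N : ℕ} (g : UG N) (z : ℂ) : ℂ :=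
  detNeg g ^ ((1 : ℂ) / 2) * z ^ (-(N : ℂ) / 2) * chi g z

/-- The derivative `Λ'_g`. -/
def LamD {N : ℕ} (g : UG N) (z : ℂ) : ℂ := deriv (Lam g) z

/-- The multiset of eigenvalues of `g`, listed in some order. -/
def eigList {N : ℕ} (g : UG N) : List ℂ :=
  ((g : Matrix (Fin N) (Fin N) ℂ).charpoly.roots).toList

/-! ### Subsequences -/

/-- The subsequence of `L` consisting of the entries with index in `K` (in order). -/
def subAt (L : List ℂ) (K : Finset ℕ) : List ℂ :=
  (List.filter (fun i : Fin L.length => decide (i.val ∈ K)) (List.finRange L.length)).map L.get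

/-- The complementary subsequence of `subAt L K`. -/
def coAt (L : List ℂ) (K : Finset ℕ) : List ℂ :=
  (List.filter (fun i : Fin L.length => decide (i.val ∉ K)) (List.finRange L.length)).map L.get


/-! ### auxiliary development -/

lemma mem_rect {m n : ℕ} {c : ℕ × ℕ} : c ∈ (rect m n).cells ↔ c.1 < n ∧ c.2 < m := by
  cases c
  simp [rect, YoungDiagram.cells]

lemma mem_strip {μ l : YoungDiagram} {i j : ℕ} :
    (i, j) ∈ l.cells \ μ.cells ↔ μ.rowLen i ≤ j ∧ j < l.rowLen i := by
  simp only [Finset.mem_sdiff, YoungDiagram.mem_cells, YoungDiagram.mem_iff_lt_rowLen]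
  omega

/-- top row of the strip. -/
def topRow (μ l : YoungDiagram) : ℕ :=
  WithTop.untopD 0 (((l.cells \ μ.cells).image Prod.fst).min)

/-- bottom row of the strip. -/
def botRow (μ l : YoungDiagram) : ℕ :=
  WithBot.unbotD 0 (((l.cells \ μ.cells).image Prod.fst).max)

lemma topRow_eq_min' {μ l : YoungDiagram} (h : ((l.cells \ μ.cells).image Prod.fst).Nonempty) :
    topRow μ l = ((l.cells \ μ.cells).image Prod.fst).min' h := by
  rw [topRow, ← Finset.coe_min' h, WithTop.untopD_coe]

lemma botRow_eq_max' {μ l : YoungDiagram} (h : ((l.cells \ μ.cells).image Prod.fst).Nonempty) :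
    botRow μ l = ((l.cells \ μ.cells).image Prod.fst).max' h := by
  rw [botRow, ← Finset.coe_max' h, WithBot.unbotD_coe]

lemma adjCell_rows {c d : ℕ × ℕ} (hadj : adjCell c d) :
    c.1 = d.1 ∨ c.1 = d.1 + 1 ∨ d.1 = c.1 + 1 := by
  rcases hadj with ⟨h, _⟩ | ⟨_, h⟩ <;> omega

/-- rows visited along a path interpolate. -/
lemma path_rows {S : Finset (ℕ × ℕ)} {c d : ℕ × ℕ}
    (hp : Relation.ReflTransGen (fun a b => a ∈ S ∧ b ∈ S ∧ adjCell a b) c d)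
    (hc : c ∈ S) :
    ∀ i : ℕ, ((d.1 ≤ i ∧ i ≤ c.1) ∨ (c.1 ≤ i ∧ i ≤ d.1)) → ∃ j, (i, j) ∈ S := by
  induction hp with
  | refl =>
    intro i hi
    have : i = c.1 := by omega
    exact ⟨c.2, by simpa [this] using hc⟩
  | tail hp hstep ih =>
    rename_i b e
    intro i hi
    obtain ⟨hbS, heS, hadj⟩ := hstep
    have hrows := adjCell_rows hadj
    by_cases hcase : (b.1 ≤ i ∧ i ≤ c.1) ∨ (c.1 ≤ i ∧ i ≤ b.1)
    · exact ih i hcase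
    · have : i = e.1 := by omega
      exact ⟨e.2, by simpa [this] using heS⟩

/-- a path crossing from above row `i` to row `i` (or below) crosses vertically. -/
lemma path_cross {S : Finset (ℕ × ℕ)} {c d : ℕ × ℕ}
    (hp : Relation.ReflTransGen (fun a b => a ∈ S ∧ b ∈ S ∧ adjCell a b) c d) :
    ∀ i : ℕ, i < c.1 → d.1 ≤ i → ∃ j, (i, j) ∈ S ∧ (i + 1, j) ∈ S := by
  induction hp with
  | refl => intro i h1 h2; omega
  | tail hp hstep ih =>
    rename_i b e
    intro i h1 h2
    obtain ⟨hbS, heS, hadj⟩ := hstep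
    by_cases hb : b.1 ≤ i
    · exact ih i h1 hb
    · -- b.1 > i ≥ e.1, rows differ by ≤ 1 ⇒ b.1 = i+1, e.1 = i, vertical step
      have hrows := adjCell_rows hadj
      have hb1 : b.1 = i + 1 := by omega
      have he1 : e.1 = i := by omega
      have hcol : b.2 = e.2 := by
        rcases hadj with ⟨h, _⟩ | ⟨h, _⟩
        · omega
        · exact h
      refine ⟨e.2, ?_, ?_⟩
      · have : (i, e.2) = e := by ext <;> simp [he1]
        rw [this]; exact heS
      · have : (i + 1, e.2) = b := by ext <;> simp [hb1, hcol.symm]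
        rw [this]; exact hbS

/-- The structural facts about a ribbon strip between inner shape `μ` and outer shape `l`. -/
structure StripFacts (μ l : YoungDiagram) (k r s : ℕ) : Prop where
  rs : r ≤ s
  inside : ∀ i, r ≤ i → i ≤ s → μ.rowLen i < l.rowLen i
  outside : ∀ i, i < r ∨ s < i → μ.rowLen i = l.rowLen i
  overlap : ∀ i, r ≤ i → i < s → μ.rowLen i + 1 = l.rowLen (i + 1)
  size : ∑ i ∈ Finset.Icc r s, (l.rowLen i - μ.rowLen i) = k

lemma rowLen_le_of_le {μ l : YoungDiagram} (h : μ ≤ l) (i : ℕ) : μ.rowLen i ≤ l.rowLen i := by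
  by_contra hc
  push_neg at hc
  have h1 : (i, l.rowLen i) ∈ μ := YoungDiagram.mem_iff_lt_rowLen.2 hc
  have h2 := h h1
  rw [YoungDiagram.mem_iff_lt_rowLen] at h2
  omega

lemma ribbon_facts {μ l : YoungDiagram} {k : ℕ} (hk : 0 < k) (h : IsRibbon μ l k) :
    StripFacts μ l k (topRow μ l) (botRow μ l) := by
  obtain ⟨hle, hcard, hconn, h2x2⟩ := h
  set S := l.cells \ μ.cells with hS
  have hne : S.Nonempty := by
    rw [← Finset.card_pos, hcard]; exact hk
  have hne' : (S.image Prod.fst).Nonempty := hne.image _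
  set r := topRow μ l with hr
  set s := botRow μ l with hs
  have hrmin : ∀ c ∈ S, r ≤ c.1 := by
    intro c hc
    rw [hr, topRow_eq_min' hne']
    exact Finset.min'_le _ _ (Finset.mem_image_of_mem _ hc)
  have hsmax : ∀ c ∈ S, c.1 ≤ s := by
    intro c hc
    rw [hs, botRow_eq_max' hne']
    exact Finset.le_max' _ _ (Finset.mem_image_of_mem _ hc)
  have hrmem : ∃ j, (r, j) ∈ S := by
    rw [hr, topRow_eq_min' hne']
    have := Finset.min'_mem _ hne'
    rw [Finset.mem_image] at this
    obtain ⟨c, hc, hc1⟩ := this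
    exact ⟨c.2, by rwa [show ((S.image Prod.fst).min' hne', c.2) = c by ext <;> simp [hc1]]⟩
  have hsmem : ∃ j, (s, j) ∈ S := by
    rw [hs, botRow_eq_max' hne']
    have := Finset.max'_mem _ hne'
    rw [Finset.mem_image] at this
    obtain ⟨c, hc, hc1⟩ := this
    exact ⟨c.2, by rwa [show ((S.image Prod.fst).max' hne', c.2) = c by ext <;> simp [hc1]]⟩
  have hrs : r ≤ s := by
    obtain ⟨j, hj⟩ := hrmem; exact le_trans (le_refl r) (hsmax _ hj)
  -- every row in [r,s] meets the strip
  have hrow : ∀ i, r ≤ i → i ≤ s → ∃ j, (i, j) ∈ S := by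
    intro i hri his
    obtain ⟨jr, hjr⟩ := hrmem
    obtain ⟨js, hjs⟩ := hsmem
    have hp := hconn _ hjs _ hjr
    exact path_rows hp hjs i (by simp; omega)
  have hinside : ∀ i, r ≤ i → i ≤ s → μ.rowLen i < l.rowLen i := by
    intro i hri his
    obtain ⟨j, hj⟩ := hrow i hri his
    rw [mem_strip] at hj
    omega
  have houtside : ∀ i, i < r ∨ s < i → μ.rowLen i = l.rowLen i := by
    intro i hi
    have hle' := rowLen_le_of_le hle i
    rcases lt_or_eq_of_le hle' with hlt | heq
    · exfalso
      have hmem : (i, μ.rowLen i) ∈ S := mem_strip.2 ⟨le_refl _, hlt⟩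
      have ha := hrmin _ hmem
      have hb := hsmax _ hmem
      simp only [] at ha hb
      omega
    · exact heq
  have hoverlap : ∀ i, r ≤ i → i < s → μ.rowLen i + 1 = l.rowLen (i + 1) := by
    intro i hri his
    -- find a vertical crossing between rows i and i+1
    obtain ⟨js, hjs⟩ := hsmem
    obtain ⟨jr, hjr⟩ := hrmem
    have hp := hconn _ hjs _ hjr
    obtain ⟨j, hj1, hj2⟩ := path_cross hp i (by simpa using his) (by simpa using hri)
    rw [mem_strip] at hj1 hj2
    -- overlap: l.rowLen (i+1) ≥ μ.rowLen i + 1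
    have hge : μ.rowLen i + 1 ≤ l.rowLen (i + 1) := by omega
    -- no 2x2: l.rowLen (i+1) ≤ μ.rowLen i + 1
    by_contra hc
    have hgt : μ.rowLen i + 2 ≤ l.rowLen (i + 1) := by omega
    apply h2x2
    refine ⟨i, μ.rowLen i, ?_, ?_, ?_, ?_⟩ <;> rw [mem_strip]
    · constructor
      · exact le_refl _
      · have := l.rowLen_anti i (i + 1) (by omega); omega
    · constructor
      · have := μ.rowLen_anti i (i + 1) (by omega); omega
      · omega
    · constructor
      · omega
      · have := l.rowLen_anti i (i + 1) (by omega); omega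
    · constructor
      · have := μ.rowLen_anti i (i + 1) (by omega); omega
      · omega
  -- size
  have hdecomp : S = (Finset.Icc r s).biUnion
      (fun i => ({i} : Finset ℕ) ×ˢ Finset.Ico (μ.rowLen i) (l.rowLen i)) := by
    ext ⟨i, j⟩
    simp only [Finset.mem_biUnion, Finset.mem_Icc, Finset.mem_product, Finset.mem_singleton,
      Finset.mem_Ico]
    constructor
    · intro hij
      have h1 := hrmin _ hij
      have h2 := hsmax _ hij
      rw [mem_strip] at hij
      exact ⟨i, ⟨h1, h2⟩, rfl, hij⟩
    · rintro ⟨i', ⟨_, _⟩, rfl, hj⟩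
      exact mem_strip.2 hj
  have hsize : ∑ i ∈ Finset.Icc r s, (l.rowLen i - μ.rowLen i) = k := by
    rw [← hcard, hdecomp, Finset.card_biUnion]
    · apply Finset.sum_congr rfl
      intro i _
      rw [Finset.card_product, Finset.card_singleton, Nat.card_Ico, one_mul]
    · intro a _ b _ hab
      simp only [Finset.disjoint_left]
      rintro ⟨x, y⟩ hx hy
      simp only [Finset.mem_product, Finset.mem_singleton] at hx hy
      exact hab (hx.1.symm.trans hy.1)
  exact ⟨hrs, hinside, houtside, hoverlap, hsize⟩

lemma yd_ext {μ ν : YoungDiagram} (h : ∀ i, μ.rowLen i = ν.rowLen i) : μ = ν := by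
  have : μ.cells = ν.cells := by
    ext ⟨i, j⟩
    rw [YoungDiagram.mem_cells, YoungDiagram.mem_cells,
      YoungDiagram.mem_iff_lt_rowLen, YoungDiagram.mem_iff_lt_rowLen, h i]
  cases μ; cases ν; simpa using this

lemma icc_split {r s1 s2 : ℕ} (h1 : r ≤ s1) (h2 : s1 < s2) :
    Finset.Icc r s2 = Finset.Icc r s1 ∪ Finset.Icc (s1 + 1) s2 := by
  ext i; simp only [Finset.mem_Icc, Finset.mem_union]; omega

lemma icc_split_disj {r s1 s2 : ℕ} :
    Disjoint (Finset.Icc r s1) (Finset.Icc (s1 + 1) s2) := by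
  simp only [Finset.disjoint_left, Finset.mem_Icc]
  omega

/-- helper: two inner-uniqueness ribbons with the same top row have the same bottom row. -/
lemma inner_bot_eq {l μ1 μ2 : YoungDiagram} {k r s1 s2 : ℕ}
    (h1 : StripFacts μ1 l k r s1) (h2 : StripFacts μ2 l k r s2) : s1 = s2 := by
  by_contra hne
  -- wlog s1 < s2
  wlog hlt : s1 < s2 generalizing μ1 μ2 s1 s2
  · exact this h2 h1 (Ne.symm hne) (by omega)
  -- term comparison on Icc r s1
  have hterm : ∀ i ∈ Finset.Icc r s1,
      (l.rowLen i - μ1.rowLen i) ≤ (l.rowLen i - μ2.rowLen i) := by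
    intro i hi
    rw [Finset.mem_Icc] at hi
    rcases lt_or_eq_of_le hi.2 with h | h
    · have e1 := h1.overlap i hi.1 h
      have e2 := h2.overlap i hi.1 (by omega)
      omega
    · -- i = s1
      subst h
      have e2 := h2.overlap i hi.1 hlt
      have o1 : μ1.rowLen (i + 1) = l.rowLen (i + 1) := h1.outside (i + 1) (by omega)
      have a1 := μ1.rowLen_anti i (i + 1) (by omega)
      omega
  -- strict at s1
  have hstrict : (l.rowLen s1 - μ1.rowLen s1) + 1 ≤ (l.rowLen s1 - μ2.rowLen s1) := by
    have e2 := h2.overlap s1 (h1.rs) hlt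
    have o1 : μ1.rowLen (s1 + 1) = l.rowLen (s1 + 1) := h1.outside (s1 + 1) (by omega)
    have a1 := μ1.rowLen_anti s1 (s1 + 1) (by omega)
    have i1 := h1.inside s1 h1.rs (le_refl _)
    have i2 := h2.inside s1 h1.rs (by omega)
    omega
  have hsum1 : k + 1 ≤ ∑ i ∈ Finset.Icc r s1, (l.rowLen i - μ2.rowLen i) := by
    rw [← h1.size]
    have hs1mem : s1 ∈ Finset.Icc r s1 := by simp [h1.rs]
    rw [← Finset.sum_erase_add _ (fun i => l.rowLen i - μ1.rowLen i) hs1mem,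
      ← Finset.sum_erase_add _ (fun i => l.rowLen i - μ2.rowLen i) hs1mem]
    have hsl := Finset.sum_le_sum (f := fun i => l.rowLen i - μ1.rowLen i)
      (g := fun i => l.rowLen i - μ2.rowLen i) (s := (Finset.Icc r s1).erase s1)
      (fun i hi => hterm i (Finset.mem_of_mem_erase hi))
    omega
  have hsum2 : 1 ≤ ∑ i ∈ Finset.Icc (s1 + 1) s2, (l.rowLen i - μ2.rowLen i) := by
    have hmem : s2 ∈ Finset.Icc (s1 + 1) s2 := Finset.mem_Icc.2 (by omega)
    have hpos : 0 < l.rowLen s2 - μ2.rowLen s2 := by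
      have := h2.inside s2 (by have := h2.rs; omega) (le_refl _)
      omega
    calc 1 ≤ l.rowLen s2 - μ2.rowLen s2 := hpos
    _ ≤ _ := Finset.single_le_sum (f := fun i => l.rowLen i - μ2.rowLen i)
      (fun i _ => Nat.zero_le _) hmem
  have := h2.size
  rw [icc_split h1.rs hlt, Finset.sum_union icc_split_disj] at this
  omega

lemma inner_unique {l μ1 μ2 : YoungDiagram} {k r s1 s2 : ℕ}
    (h1 : StripFacts μ1 l k r s1) (h2 : StripFacts μ2 l k r s2) : μ1 = μ2 := by
  obtain rfl : s1 = s2 := inner_bot_eq h1 h2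
  apply yd_ext
  intro i
  by_cases hi : r ≤ i ∧ i ≤ s1
  · rcases lt_or_eq_of_le hi.2 with h | h
    · have e1 := h1.overlap i hi.1 h
      have e2 := h2.overlap i hi.1 h
      omega
    · -- i = s1 : use the size equations
      subst h
      have hs1mem : i ∈ Finset.Icc r i := by simp [hi.1]
      have hsame : ∀ j ∈ (Finset.Icc r i).erase i,
          (l.rowLen j - μ1.rowLen j) = (l.rowLen j - μ2.rowLen j) := by
        intro j hj
        have hj' := Finset.mem_of_mem_erase hj
        have hne := Finset.ne_of_mem_erase hj
        rw [Finset.mem_Icc] at hj'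
        have hlt : j < i := by omega
        have e1 := h1.overlap j hj'.1 hlt
        have e2 := h2.overlap j hj'.1 hlt
        omega
      have hs1 := h1.size
      have hs2 := h2.size
      rw [← Finset.sum_erase_add _ _ hs1mem] at hs1 hs2
      rw [Finset.sum_congr rfl hsame] at hs1
      have i1 := h1.inside i hi.1 (le_refl _)
      have i2 := h2.inside i hi.1 (le_refl _)
      omega
  · have o1 := h1.outside i (by omega)
    have o2 := h2.outside i (by omega)
    omega

/-- helper: two outer-uniqueness ribbons with the same bottom row have the same top row. -/
lemma outer_top_eq {l μ1 μ2 : YoungDiagram} {k r1 r2 s : ℕ}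
    (h1 : StripFacts l μ1 k r1 s) (h2 : StripFacts l μ2 k r2 s) : r1 = r2 := by
  by_contra hne
  wlog hlt : r1 < r2 generalizing μ1 μ2 r1 r2
  · exact this h2 h1 (Ne.symm hne) (by omega)
  have hterm : ∀ i ∈ Finset.Icc r2 s,
      (μ2.rowLen i - l.rowLen i) ≤ (μ1.rowLen i - l.rowLen i) := by
    intro i hi
    rw [Finset.mem_Icc] at hi
    rcases lt_or_eq_of_le hi.1 with h | h
    · have e1 := h1.overlap (i - 1) (by omega) (by omega)
      have e2 := h2.overlap (i - 1) (by omega) (by omega)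
      have : i - 1 + 1 = i := by omega
      rw [this] at e1 e2
      omega
    · -- i = r2
      subst h
      have e1 := h1.overlap (r2 - 1) (by omega) (by omega)
      have hh : r2 - 1 + 1 = r2 := by omega
      rw [hh] at e1
      have o2 : l.rowLen (r2 - 1) = μ2.rowLen (r2 - 1) := h2.outside (r2 - 1) (by omega)
      have a2 := μ2.rowLen_anti (r2 - 1) r2 (by omega)
      omega
  have hstrict : (μ2.rowLen r2 - l.rowLen r2) + 1 ≤ (μ1.rowLen r2 - l.rowLen r2) := by
    have e1 := h1.overlap (r2 - 1) (by omega) (by have := h2.rs; omega)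
    have hh : r2 - 1 + 1 = r2 := by omega
    rw [hh] at e1
    have o2 : l.rowLen (r2 - 1) = μ2.rowLen (r2 - 1) := h2.outside (r2 - 1) (by omega)
    have a2 := μ2.rowLen_anti (r2 - 1) r2 (by omega)
    have i1 := h1.inside r2 (by omega) h2.rs
    have i2 := h2.inside r2 (le_refl _) h2.rs
    omega
  have hsum1 : k + 1 ≤ ∑ i ∈ Finset.Icc r2 s, (μ1.rowLen i - l.rowLen i) := by
    rw [← h2.size]
    have hmem : r2 ∈ Finset.Icc r2 s := by simp [h2.rs]
    rw [← Finset.sum_erase_add _ (fun i => μ2.rowLen i - l.rowLen i) hmem,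
      ← Finset.sum_erase_add _ (fun i => μ1.rowLen i - l.rowLen i) hmem]
    have hsl := Finset.sum_le_sum (f := fun i => μ2.rowLen i - l.rowLen i)
      (g := fun i => μ1.rowLen i - l.rowLen i) (s := (Finset.Icc r2 s).erase r2)
      (fun i hi => hterm i (Finset.mem_of_mem_erase hi))
    omega
  have hsum2 : 1 ≤ ∑ i ∈ Finset.Icc r1 (r2 - 1), (μ1.rowLen i - l.rowLen i) := by
    have hmem : r1 ∈ Finset.Icc r1 (r2 - 1) := by simp; omega
    have hpos : 0 < μ1.rowLen r1 - l.rowLen r1 := by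
      have := h1.inside r1 (le_refl _) h1.rs
      omega
    calc 1 ≤ μ1.rowLen r1 - l.rowLen r1 := hpos
    _ ≤ _ := Finset.single_le_sum (f := fun i => μ1.rowLen i - l.rowLen i)
      (fun i _ => Nat.zero_le _) hmem
  have hsplit : Finset.Icc r1 s = Finset.Icc r1 (r2 - 1) ∪ Finset.Icc r2 s := by
    ext i; simp only [Finset.mem_Icc, Finset.mem_union]
    have := h2.rs; omega
  have hdisj : Disjoint (Finset.Icc r1 (r2 - 1)) (Finset.Icc r2 s) := by
    simp only [Finset.disjoint_left, Finset.mem_Icc]; omega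
  have := h1.size
  rw [hsplit, Finset.sum_union hdisj] at this
  omega

lemma outer_unique {l μ1 μ2 : YoungDiagram} {k r1 r2 s : ℕ}
    (h1 : StripFacts l μ1 k r1 s) (h2 : StripFacts l μ2 k r2 s) : μ1 = μ2 := by
  obtain rfl : r1 = r2 := outer_top_eq h1 h2
  apply yd_ext
  intro i
  by_cases hi : r1 ≤ i ∧ i ≤ s
  · rcases lt_or_eq_of_le hi.1 with h | h
    · have e1 := h1.overlap (i - 1) (by omega) (by omega)
      have e2 := h2.overlap (i - 1) (by omega) (by omega)
      have hh : i - 1 + 1 = i := by omega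
      rw [hh] at e1 e2
      omega
    · -- i = r1
      subst h
      have hmem : r1 ∈ Finset.Icc r1 s := by simp [hi.2]
      have hsame : ∀ j ∈ (Finset.Icc r1 s).erase r1,
          (μ1.rowLen j - l.rowLen j) = (μ2.rowLen j - l.rowLen j) := by
        intro j hj
        have hj' := Finset.mem_of_mem_erase hj
        have hne := Finset.ne_of_mem_erase hj
        rw [Finset.mem_Icc] at hj'
        have e1 := h1.overlap (j - 1) (by omega) (by omega)
        have e2 := h2.overlap (j - 1) (by omega) (by omega)
        have hh : j - 1 + 1 = j := by omega
        rw [hh] at e1 e2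
        omega
      have hs1 := h1.size
      have hs2 := h2.size
      rw [← Finset.sum_erase_add _ _ hmem] at hs1 hs2
      rw [Finset.sum_congr rfl hsame] at hs1
      have i1 := h1.inside r1 (le_refl _) hi.2
      have i2 := h2.inside r1 (le_refl _) hi.2
      omega
  · have o1 := h1.outside i (by omega)
    have o2 := h2.outside i (by omega)
    omega

/-! ### transpose -/

lemma adjCell_swap {a b : ℕ × ℕ} (h : adjCell a b) : adjCell a.swap b.swap := by
  rcases h with ⟨h1, h2⟩ | ⟨h1, h2⟩
  · exact Or.inr ⟨h1, h2⟩
  · exact Or.inl ⟨h1, h2⟩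

lemma mem_image_swap {S : Finset (ℕ × ℕ)} {c : ℕ × ℕ} :
    c ∈ S.image Prod.swap ↔ c.swap ∈ S := by
  rw [Finset.mem_image]
  constructor
  · rintro ⟨a, ha, rfl⟩; simpa using ha
  · intro h; exact ⟨c.swap, h, by simp⟩

lemma strip_transpose {μ l : YoungDiagram} :
    l.transpose.cells \ μ.transpose.cells = (l.cells \ μ.cells).image Prod.swap := by
  ext c
  rw [mem_image_swap, Finset.mem_sdiff, Finset.mem_sdiff]
  simp only [YoungDiagram.mem_cells, YoungDiagram.mem_transpose]

lemma isRibbon_transpose {μ l : YoungDiagram} {k : ℕ} (h : IsRibbon μ l k) :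
    IsRibbon μ.transpose l.transpose k := by
  obtain ⟨hle, hcard, hconn, h2x2⟩ := h
  refine ⟨YoungDiagram.transpose_mono hle, ?_, ?_, ?_⟩
  · rw [strip_transpose, Finset.card_image_of_injective _ Prod.swap_injective, hcard]
  · rw [strip_transpose]
    intro c hc d hd
    rw [Finset.mem_image] at hc hd
    obtain ⟨a, ha, rfl⟩ := hc
    obtain ⟨b, hb, rfl⟩ := hd
    have hp := hconn a ha b hb
    refine Relation.ReflTransGen.lift Prod.swap ?_ _ _ hp
    rintro x y ⟨hx, hy, hadj⟩
    exact ⟨Finset.mem_image_of_mem _ hx, Finset.mem_image_of_mem _ hy, adjCell_swap hadj⟩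
  · rw [strip_transpose]
    rintro ⟨i, j, h1, h2, h3, h4⟩
    apply h2x2
    rw [mem_image_swap] at h1 h2 h3 h4
    simp only [Prod.swap_prod_mk] at h1 h2 h3 h4
    exact ⟨j, i, h1, h3, h2, h4⟩

lemma rect_transpose (m n : ℕ) : (rect m n).transpose = rect n m := by
  have hc : (rect m n).transpose.cells = (rect n m).cells := by
    ext c
    rw [YoungDiagram.mem_cells, YoungDiagram.mem_transpose, ← YoungDiagram.mem_cells,
      mem_rect, mem_rect]
    cases c
    simp only [Prod.swap_prod_mk]
    tauto
  cases' h1 : (rect m n).transpose with c1 p1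
  cases' h2 : rect n m with c2 p2
  rw [h1, h2] at hc
  simpa using hc

lemma le_rect_transpose {m n : ℕ} {l : YoungDiagram} (h : l ≤ rect m n) :
    l.transpose ≤ rect n m := by
  have := YoungDiagram.transpose_mono h
  rwa [rect_transpose] at this

/-! ### counting -/

lemma count_aux {T : Set YoungDiagram} {f : YoungDiagram → ℕ} {n : ℕ}
    (hinj : Set.InjOn f T) (hmaps : ∀ μ ∈ T, f μ < n) :
    T.Finite ∧ T.ncard ≤ n := by
  have hmaps' : Set.MapsTo f T (Set.Iio n) := fun μ hμ => hmaps μ hμ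
  have hIio : (Set.Iio n).Finite := Set.finite_Iio n
  have hfin : T.Finite := Set.Finite.of_finite_image (hIio.subset (Set.image_subset_iff.2 hmaps')) hinj
  refine ⟨hfin, ?_⟩
  have := Set.ncard_le_ncard_of_injOn f hmaps' hinj hIio
  rwa [show (Set.Iio n).ncard = n by
    rw [← Finset.coe_range, Set.ncard_coe_finset, Finset.card_range]] at this

/-- **Lemma 4.1**: for a partition `λ ⊆ ⟨m^n⟩` there are at most `min{m,n}` partitions `μ`
such that `λ∖μ` is a `k`-ribbon, and at most `min{m,n}` partitions `μ ⊆ ⟨m^n⟩` such that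
`μ∖λ` is a `k`-ribbon. -/
theorem ribbon_count (k : ℕ) (hk : 0 < k) (m n : ℕ) (l : YoungDiagram)
    (hl : l ≤ rect m n) :
    ({μ : YoungDiagram | IsRibbon μ l k}.Finite ∧
      {μ : YoungDiagram | IsRibbon μ l k}.ncard ≤ min m n) ∧
    ({μ : YoungDiagram | IsRibbon l μ k ∧ μ ≤ rect m n}.Finite ∧
      {μ : YoungDiagram | IsRibbon l μ k ∧ μ ≤ rect m n}.ncard ≤ min m n) := by
  constructor
  · -- removed ribbons
    have hinjn : Set.InjOn (fun μ => topRow μ l) {μ : YoungDiagram | IsRibbon μ l k} := by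
      intro μ1 h1 μ2 h2 heq
      simp only [Set.mem_setOf_eq] at h1 h2
      have heq' : topRow μ1 l = topRow μ2 l := heq
      exact inner_unique (show StripFacts μ1 l k (topRow μ2 l) _ from
        heq' ▸ ribbon_facts hk h1) (ribbon_facts hk h2)
    have hbn : ∀ μ ∈ {μ : YoungDiagram | IsRibbon μ l k}, topRow μ l < n := by
      intro μ h
      simp only [Set.mem_setOf_eq] at h
      have f := ribbon_facts hk h
      have hcell : (topRow μ l, μ.rowLen (topRow μ l)) ∈ l :=
        YoungDiagram.mem_iff_lt_rowLen.2 (f.inside _ le_rfl f.rs)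
      exact (mem_rect.1 (hl hcell)).1
    have hinjm : Set.InjOn (fun μ => topRow μ.transpose l.transpose)
        {μ : YoungDiagram | IsRibbon μ l k} := by
      intro μ1 h1 μ2 h2 heq
      simp only [Set.mem_setOf_eq] at h1 h2
      have t1 := isRibbon_transpose h1
      have t2 := isRibbon_transpose h2
      have heq' : topRow μ1.transpose l.transpose = topRow μ2.transpose l.transpose := heq
      have := inner_unique (show StripFacts μ1.transpose l.transpose k
        (topRow μ2.transpose l.transpose) _ from heq' ▸ ribbon_facts hk t1)
        (ribbon_facts hk t2)
      exact YoungDiagram.transpose_eq_iff.1 this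
    have hbm : ∀ μ ∈ {μ : YoungDiagram | IsRibbon μ l k},
        topRow μ.transpose l.transpose < m := by
      intro μ h
      simp only [Set.mem_setOf_eq] at h
      have f := ribbon_facts hk (isRibbon_transpose h)
      have hcell : (topRow μ.transpose l.transpose,
          μ.transpose.rowLen (topRow μ.transpose l.transpose)) ∈ l.transpose :=
        YoungDiagram.mem_iff_lt_rowLen.2 (f.inside _ le_rfl f.rs)
      exact (mem_rect.1 (le_rect_transpose hl hcell)).1
    obtain ⟨hfin, hn⟩ := count_aux hinjn hbn
    obtain ⟨_, hm⟩ := count_aux hinjm hbm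
    exact ⟨hfin, le_min hm hn⟩
  · -- added ribbons
    have hinjn : Set.InjOn (fun μ => botRow l μ)
        {μ : YoungDiagram | IsRibbon l μ k ∧ μ ≤ rect m n} := by
      intro μ1 h1 μ2 h2 heq
      simp only [Set.mem_setOf_eq] at h1 h2
      have heq' : botRow l μ1 = botRow l μ2 := heq
      exact outer_unique (show StripFacts l μ1 k _ (botRow l μ2) from
        heq' ▸ ribbon_facts hk h1.1) (ribbon_facts hk h2.1)
    have hbn : ∀ μ ∈ {μ : YoungDiagram | IsRibbon l μ k ∧ μ ≤ rect m n},
        botRow l μ < n := by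
      intro μ h
      simp only [Set.mem_setOf_eq] at h
      have f := ribbon_facts hk h.1
      have hcell : (botRow l μ, l.rowLen (botRow l μ)) ∈ μ :=
        YoungDiagram.mem_iff_lt_rowLen.2 (f.inside _ f.rs le_rfl)
      exact (mem_rect.1 (h.2 hcell)).1
    have hinjm : Set.InjOn (fun μ => botRow l.transpose μ.transpose)
        {μ : YoungDiagram | IsRibbon l μ k ∧ μ ≤ rect m n} := by
      intro μ1 h1 μ2 h2 heq
      simp only [Set.mem_setOf_eq] at h1 h2
      have t1 := isRibbon_transpose h1.1
      have t2 := isRibbon_transpose h2.1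
      have heq' : botRow l.transpose μ1.transpose = botRow l.transpose μ2.transpose := heq
      have := outer_unique (show StripFacts l.transpose μ1.transpose k _
        (botRow l.transpose μ2.transpose) from heq' ▸ ribbon_facts hk t1)
        (ribbon_facts hk t2)
      exact YoungDiagram.transpose_eq_iff.1 this
    have hbm : ∀ μ ∈ {μ : YoungDiagram | IsRibbon l μ k ∧ μ ≤ rect m n},
        botRow l.transpose μ.transpose < m := by
      intro μ h
      simp only [Set.mem_setOf_eq] at h
      have f := ribbon_facts hk (isRibbon_transpose h.1)
      have hcell : (botRow l.transpose μ.transpose,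
          l.transpose.rowLen (botRow l.transpose μ.transpose)) ∈ μ.transpose :=
        YoungDiagram.mem_iff_lt_rowLen.2 (f.inside _ f.rs le_rfl)
      exact (mem_rect.1 (le_rect_transpose h.2 hcell)).1
    obtain ⟨hfin, hn⟩ := count_aux hinjn hbn
    obtain ⟨_, hm⟩ := count_aux hinjm hbm
    exact ⟨hfin, le_min hm hn⟩


end RMT
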